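/- For the extended Ackermann functions A_α(k,b) indexed by ordinals α < ε₀, one has A_α(k,b) ≥ Nα + b, where Nα is the number of occurrences of ω in the Cantor normal form of α; consequently, for every m and k there are only finitely many α < ε₀ with A_α(k,0) ≤ m. -/

import Mathlib

/-- The predecessor of an ordinal notation: `some β` with `β + 1 = α` if `α` is
a successor, `none` otherwise. -/
def predO : ONote → Option ONote
  | .zero => none
  | .oadd .zero n .zero =>
      some (if h : (n : ℕ) = 1 then .zero
            else .oadd .zero ⟨(n : ℕ) - 1, by have h3 : 0 < (n : ℕ) := n.2; omega⟩ .zero)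
  | .oadd _ _ .zero => none
  | .oadd e n a => (predO a).map (.oadd e n)

/-- The standard fundamental sequences for ordinals below `ε₀` (in Cantor normal
form): `0[x] = 0`, `(β+1)[x] = β`, `(δ + ω^{γ+1})[x] = δ + ω^γ·x` and
`(δ + ω^λ)[x] = δ + ω^{λ[x]}` for limits `λ`. -/
def fundSeq : ONote → ℕ → ONote
  | .zero, _ => .zero
  | .oadd e n (.oadd e' n' a'), x => .oadd e n (fundSeq (.oadd e' n' a') x)
  | .oadd .zero n .zero, _ =>
      if h : (n : ℕ) = 1 then .zero
      else .oadd .zero ⟨(n : ℕ) - 1, by have h3 : 0 < (n : ℕ) := n.2; omega⟩ .zero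
  | .oadd (.oadd f m b) n .zero, x =>
      let tail : ONote :=
        match predO (.oadd f m b) with
        | some e' =>
            if h : x = 0 then .zero
            else .oadd e' ⟨x, Nat.pos_of_ne_zero h⟩ .zero
        | none => .oadd (fundSeq (.oadd f m b) x) 1 .zero
      if h : (n : ℕ) = 1 then tail
      else .oadd (.oadd f m b) ⟨(n : ℕ) - 1, by have h3 : 0 < (n : ℕ) := n.2; omega⟩ tail

mutual
/-- The graph of the extended Ackermann function: `EA k α b v` means
`A_α(k,b) = v`, where for limits `λ` one uses the iterated fundamental-sequence
indices `λ_{l,k,b}` (see `LamSeq`). -/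
inductive EA (k : ℕ) : ONote → ℕ → ℕ → Prop
  | zero (b : ℕ) : EA k .zero b (b + 1)
  | succZero {α β : ONote} {v : ℕ} :
      predO α = some β → IterEA k β k 0 v → EA k α 0 v
  | succStep {α β : ONote} {b w v : ℕ} :
      predO α = some β → EA k α b w → IterEA k β k w v → EA k α (b + 1) v
  | limZero {α μ : ONote} {v : ℕ} :
      α ≠ .zero → predO α = none →
      LamSeq k α 0 k μ → IterEA k μ k 0 v → EA k α 0 v
  | limStep {α μ : ONote} {b w v : ℕ} :
      α ≠ .zero → predO α = none →
      EA k α b w → LamSeq k α w k μ → IterEA k μ k w v → EA k α (b + 1) v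

/-- `IterEA k α n b v` means `(A_α(k,·))^n(b) = v`. -/
inductive IterEA (k : ℕ) : ONote → ℕ → ℕ → ℕ → Prop
  | zero (α : ONote) (b : ℕ) : IterEA k α 0 b b
  | succ {α : ONote} {n b v w : ℕ} :
      IterEA k α n b v → EA k α v w → IterEA k α (n + 1) b w

/-- `LamSeq k λ b l μ` means `μ = λ_{l,k,b}`, where `λ_{0,k,b} = λ[b]` and
`λ_{l+1,k,b} = λ[A_{λ_{l,k,b}}(k,b)]`. -/
inductive LamSeq (k : ℕ) : ONote → ℕ → ℕ → ONote → Prop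
  | zero (α : ONote) (b : ℕ) : LamSeq k α b 0 (fundSeq α b)
  | succ {α μ : ONote} {b l v : ℕ} :
      LamSeq k α b l μ → EA k μ b v → LamSeq k α b (l + 1) (fundSeq α v)
end

/-- `Nα`: the number of occurrences of `ω` in the Cantor normal form of `α`. -/
def Ncount : ONote → ℕ
  | .zero => 0
  | .oadd e n a => (n : ℕ) * (1 + Ncount e) + Ncount a


lemma Ncount_oadd (e : ONote) (n : ℕ+) (a : ONote) :
    Ncount (.oadd e n a) = (n : ℕ) * (1 + Ncount e) + Ncount a := rfl

lemma pred_Ncount : ∀ {α β : ONote}, predO α = some β → Ncount α = Ncount β + 1 := by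
  intro α
  induction α with
  | zero => simp [predO]
  | oadd e n a ihe iha =>
    cases a with
    | zero =>
      cases e with
      | zero =>
        intro β h
        simp only [predO, Option.some.injEq] at h
        subst h
        split
        · simp [Ncount, *]
        · simp [Ncount, Ncount_oadd]
          have : 0 < (n : ℕ) := n.2
          omega
      | oadd f m b => intro β h; simp [predO] at h
    | oadd e' n' a' =>
      intro β h
      simp only [predO, Option.map_eq_some_iff] at h
      obtain ⟨β', hβ', rfl⟩ := h
      simp [Ncount_oadd, iha hβ']
      omega
lemma Ncount_zero' : Ncount .zero = 0 := rfl

lemma fund_bounds : ∀ (α : ONote) (x : ℕ), α ≠ .zero → predO α = none → 1 ≤ x →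
    x ≤ Ncount (fundSeq α x) ∧ Ncount α ≤ Ncount (fundSeq α x) + 1 := by
  intro α
  induction α with
  | zero => intro x h; exact absurd rfl h
  | oadd e n a ihe iha =>
    intro x _ hpred hx
    cases a with
    | oadd e' n' a' =>
      have hpa : predO (ONote.oadd e' n' a') = none := by
        simp only [predO, Option.map_eq_none_iff] at hpred
        exact hpred
      have H := iha x (by simp) hpa hx
      simp only [fundSeq]
      simp only [Ncount_oadd] at H ⊢
      omega
    | zero =>
      cases e with
      | zero => simp [predO] at hpred
      | oadd f m b =>
        have hsm : ∀ E : ℕ, ((n:ℕ) - 1) * (1 + E) + (1 + E) = (n:ℕ) * (1 + E) := by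
          obtain ⟨n0, hn0⟩ : ∃ n0, (n:ℕ) = n0 + 1 := ⟨(n:ℕ)-1, by have : 0 < (n:ℕ) := n.2; omega⟩
          intro E
          rw [hn0]
          simp [Nat.succ_mul]
        have hlm : ∀ E : ℕ, (1 + E) ≤ (n:ℕ) * (1 + E) := fun E =>
          Nat.le_mul_of_pos_left _ n.2
        rcases hpe : predO (ONote.oadd f m b) with _ | e'
        · -- e is a limit
          have H := ihe x (by simp) hpe hx
          simp only [fundSeq, hpe]
          simp only [Ncount_oadd] at H
          split
          case isTrue h1 =>
            simp only [Ncount_oadd, Ncount_zero', h1, one_mul, PNat.one_coe]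
            omega
          case isFalse h1 =>
            simp only [Ncount_oadd, Ncount_zero', one_mul, PNat.one_coe, PNat.mk_coe, Ncount]
            have h2 := hsm (↑m * (1 + Ncount f) + Ncount b)
            have h3 := hlm (↑m * (1 + Ncount f) + Ncount b)
            omega
        · -- e is a successor
          have hNe : Ncount (ONote.oadd f m b) = Ncount e' + 1 := pred_Ncount hpe
          simp only [Ncount_oadd] at hNe
          have hx0 : x ≠ 0 := by omega
          have hxa : 1 + Ncount e' ≤ x * (1 + Ncount e') := Nat.le_mul_of_pos_left _ (by omega)
          have hxx : x ≤ x * (1 + Ncount e') := Nat.le_mul_of_pos_right _ (by omega)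
          simp only [fundSeq, hpe, dif_neg hx0]
          split
          case isTrue h1 =>
            simp only [Ncount_oadd, Ncount_zero', h1, one_mul, PNat.one_coe, PNat.mk_coe, Ncount]
            omega
          case isFalse h1 =>
            simp only [Ncount_oadd, Ncount_zero', one_mul, PNat.one_coe, PNat.mk_coe, Ncount]
            have h2 := hsm (↑m * (1 + Ncount f) + Ncount b)
            have h3 := hlm (↑m * (1 + Ncount f) + Ncount b)
            omega
lemma key (k : ℕ) (hk : 3 ≤ k) {α : ONote} {b v : ℕ} (h : EA k α b v) :
    Ncount α + b + 1 ≤ v := by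
  refine EA.rec (k := k)
    (motive_1 := fun α b v _ => Ncount α + b + 1 ≤ v)
    (motive_2 := fun α n b v _ => b + n * (Ncount α + 1) ≤ v)
    (motive_3 := fun α b l μ _ => α ≠ .zero → predO α = none →
      (1 ≤ l → Ncount α ≤ Ncount μ + 1) ∧ (2 ≤ l → Ncount α ≤ Ncount μ))
    ?_ ?_ ?_ ?_ ?_ ?_ ?_ ?_ ?_ h
  · -- zero
    intro b; have h0 : Ncount ONote.zero = 0 := rfl; omega
  · -- succZero
    intro α β v hp _ ih2
    have hN : Ncount α = Ncount β + 1 := pred_Ncount hp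
    have h2 : 2 * (Ncount β + 1) ≤ k * (Ncount β + 1) :=
      Nat.mul_le_mul_right _ (by omega)
    omega
  · -- succStep
    intro α β b w v hp _ _ ih1 ih2
    have h1 : 1 ≤ k * (Ncount β + 1) := Nat.one_le_iff_ne_zero.2 (by positivity)
    omega
  · -- limZero
    intro α μ v hne hp _ _ ih3 ih2
    have h3 := (ih3 hne hp).2 (by omega)
    have h2 : 1 * (Ncount μ + 1) ≤ k * (Ncount μ + 1) :=
      Nat.mul_le_mul_right _ (by omega)
    omega
  · -- limStep
    intro α μ b w v hne hp _ _ _ ih1 ih3 ih2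
    have h1 : 1 ≤ k * (Ncount μ + 1) := Nat.one_le_iff_ne_zero.2 (by positivity)
    omega
  · -- iter zero
    intro α b; simp
  · -- iter succ
    intro α n b v w _ _ ih2 ih1
    have : (n + 1) * (Ncount α + 1) = n * (Ncount α + 1) + (Ncount α + 1) := by
      rw [Nat.succ_mul]
    omega
  · -- lamseq zero
    intro α b _ _
    exact ⟨by omega, by omega⟩
  · -- lamseq succ
    intro α μ b l v _ _ ih3 ih1
    intro hne hp
    have hv1 : 1 ≤ v := by omega
    have hfb := fund_bounds α v hne hp hv1
    constructor
    · intro _; omega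
    · intro hl2
      have := (ih3 hne hp).1 (by omega)
      omega
lemma Ncount_finite : ∀ m : ℕ, {α : ONote | Ncount α ≤ m}.Finite := by
  intro m
  induction m with
  | zero =>
    apply Set.Finite.subset (Set.finite_singleton ONote.zero)
    intro α hα
    cases α with
    | zero => rfl
    | oadd e n a =>
      exfalso
      simp only [Set.mem_setOf_eq, Ncount_oadd, Nat.le_zero] at hα
      have h1 : 0 < (n : ℕ) * (1 + Ncount e) := Nat.mul_pos n.2 (by omega)
      omega
  | succ m ih =>
    have hn : {n : ℕ+ | (n:ℕ) ≤ m + 1}.Finite := by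
      have : ((fun n : ℕ+ => (n : ℕ)) ⁻¹' (Set.Iic (m+1))).Finite :=
        Set.Finite.preimage (Function.Injective.injOn (fun a b h => PNat.coe_injective h))
          (Set.finite_Iic (m+1))
      exact this
    apply Set.Finite.subset
      (Set.Finite.insert ONote.zero
        ((ih.prod (hn.prod ih)).image
          (fun p : ONote × ℕ+ × ONote => ONote.oadd p.1 p.2.1 p.2.2)))
    intro α hα
    simp only [Set.mem_setOf_eq] at hα
    cases α with
    | zero => exact Set.mem_insert _ _
    | oadd e n a =>
      apply Set.mem_insert_of_mem
      refine ⟨(e, n, a), ?_, rfl⟩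
      simp only [Ncount_oadd] at hα
      have h1 : 1 + Ncount e ≤ (n : ℕ) * (1 + Ncount e) := Nat.le_mul_of_pos_left _ n.2
      have h2 : (n : ℕ) ≤ (n : ℕ) * (1 + Ncount e) := Nat.le_mul_of_pos_right _ (by omega)
      exact ⟨by simp only [Set.mem_setOf_eq]; omega,
        by simp only [Set.mem_setOf_eq]; omega, by simp only [Set.mem_setOf_eq]; omega⟩
/-- `A_α(k,b) ≥ Nα + b`; consequently for every `m` (and `k`) there are only
finitely many `α < ε₀` with `A_α(k,0) ≤ m`. -/
theorem ea_ge_Ncount_and_finite :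
    (∀ k : ℕ, 3 ≤ k → ∀ (α : ONote) (b v : ℕ), α.NF → EA k α b v →
      Ncount α + b ≤ v) ∧
    (∀ k m : ℕ, 3 ≤ k →
      {α : ONote | α.NF ∧ ∃ v, EA k α 0 v ∧ v ≤ m}.Finite) := by
  constructor
  · intro k hk α b v _ h
    have := key k hk h
    omega
  · intro k m hk
    apply Set.Finite.subset (Ncount_finite m)
    rintro α ⟨_, v, hea, hvm⟩
    have := key k hk hea
    simp only [Set.mem_setOf_eq]
    omega
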